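/- Tightness of the variational bound (equality case of Theorem 1): Let Ω be a finite type with probability mass function P, let X : Ω → 𝒳 and S : Ω → 𝒮 be random variables into finite types, and let Q : 𝒳 → 𝒮 → ℝ be a family of probability mass functions on 𝒮 with Q x s > 0 whenever P(X = x, S = s) > 0. Then I(X; S) = H(S) + ∑_{x,s} P(X = x, S = s) · log (Q x s) holds if and only if for every x with P(X = x) > 0 and every s, Q x s = P(S = s | X = x). In particular, the variational lower bound H(S) + ∑_{x,s} P(X = x, S = s) · log(Q x s) attains its maximum value I(X; S) exactly when Q is the true conditional distribution. -/
import Mathlib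

open Finset Real

/-- Marginal probability `P(X = x) = ∑_{ω : X ω = x} P ω`. -/
noncomputable def margin {Ω 𝒳 : Type*} [Fintype Ω] [DecidableEq 𝒳]
    (P : Ω → ℝ) (X : Ω → 𝒳) (x : 𝒳) : ℝ :=
  ∑ ω, if X ω = x then P ω else 0

/-- Joint probability `P(X = x, S = s) = ∑_{ω : X ω = x ∧ S ω = s} P ω`. -/
noncomputable def joint {Ω 𝒳 𝒮 : Type*} [Fintype Ω] [DecidableEq 𝒳] [DecidableEq 𝒮]
    (P : Ω → ℝ) (X : Ω → 𝒳) (S : Ω → 𝒮) (x : 𝒳) (s : 𝒮) : ℝ :=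
  ∑ ω, if X ω = x ∧ S ω = s then P ω else 0

/-- Shannon entropy `H(S) = -∑_s P(S = s) log P(S = s)` (with `0 · log 0 = 0`,
which holds automatically since `Real.log 0 = 0`). -/
noncomputable def entropy {Ω 𝒮 : Type*} [Fintype Ω] [Fintype 𝒮] [DecidableEq 𝒮]
    (P : Ω → ℝ) (S : Ω → 𝒮) : ℝ :=
  -∑ s, margin P S s * Real.log (margin P S s)

/-- Mutual information
`I(X;S) = ∑_{x,s} P(X = x, S = s) · log (P(X = x, S = s) / (P(X = x) P(S = s)))`;
summands with `P(X = x, S = s) = 0` vanish since they have factor `0`. -/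
noncomputable def mutualInfo {Ω 𝒳 𝒮 : Type*} [Fintype Ω] [Fintype 𝒳] [Fintype 𝒮]
    [DecidableEq 𝒳] [DecidableEq 𝒮] (P : Ω → ℝ) (X : Ω → 𝒳) (S : Ω → 𝒮) : ℝ :=
  ∑ x, ∑ s, joint P X S x s *
    Real.log (joint P X S x s / (margin P X x * margin P S s))

section AuxLemmas

set_option linter.unusedSectionVars false

variable {Ω 𝒳 𝒮 : Type*} [Fintype Ω] [Fintype 𝒳] [Fintype 𝒮] [DecidableEq 𝒳] [DecidableEq 𝒮]

lemma joint_nonneg' (P : Ω → ℝ) (hP : ∀ ω, 0 ≤ P ω) (X : Ω → 𝒳) (S : Ω → 𝒮) (x : 𝒳) (s : 𝒮) :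
    0 ≤ joint P X S x s :=
  Finset.sum_nonneg fun ω _ => by split_ifs; exacts [hP ω, le_rfl]

lemma margin_nonneg' (P : Ω → ℝ) (hP : ∀ ω, 0 ≤ P ω) (X : Ω → 𝒳) (x : 𝒳) :
    0 ≤ margin P X x :=
  Finset.sum_nonneg fun ω _ => by split_ifs; exacts [hP ω, le_rfl]

lemma joint_le_marginX' (P : Ω → ℝ) (hP : ∀ ω, 0 ≤ P ω) (X : Ω → 𝒳) (S : Ω → 𝒮) (x : 𝒳) (s : 𝒮) :
    joint P X S x s ≤ margin P X x := by
  apply Finset.sum_le_sum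
  intro ω _
  split_ifs with h1 h2 h2
  exacts [le_rfl, absurd h1.1 h2, hP ω, le_rfl]

lemma joint_le_marginS' (P : Ω → ℝ) (hP : ∀ ω, 0 ≤ P ω) (X : Ω → 𝒳) (S : Ω → 𝒮) (x : 𝒳) (s : 𝒮) :
    joint P X S x s ≤ margin P S s := by
  apply Finset.sum_le_sum
  intro ω _
  split_ifs with h1 h2 h2
  exacts [le_rfl, absurd h1.2 h2, hP ω, le_rfl]

lemma sum_s_joint' (P : Ω → ℝ) (X : Ω → 𝒳) (S : Ω → 𝒮) (x : 𝒳) :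
    ∑ s, joint P X S x s = margin P X x := by
  unfold joint margin
  rw [Finset.sum_comm]
  refine Finset.sum_congr rfl fun ω _ => ?_
  by_cases h : X ω = x <;> simp [h]

lemma sum_x_joint' (P : Ω → ℝ) (X : Ω → 𝒳) (S : Ω → 𝒮) (s : 𝒮) :
    ∑ x, joint P X S x s = margin P S s := by
  unfold joint margin
  rw [Finset.sum_comm]
  refine Finset.sum_congr rfl fun ω _ => ?_
  by_cases h : S ω = s <;> simp [h]

end AuxLemmas

lemma gibbs' {𝒮 : Type*} [Fintype 𝒮] (p q : 𝒮 → ℝ) (t : ℝ) (ht : 0 < t)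
    (hp : ∀ s, 0 ≤ p s) (hq : ∀ s, 0 ≤ q s) (hps : ∑ s, p s = t) (hqs : ∑ s, q s = 1)
    (hpos : ∀ s, 0 < p s → 0 < q s) :
    (0 ≤ ∑ s, p s * Real.log (p s / (t * q s))) ∧
    ((∑ s, p s * Real.log (p s / (t * q s))) = 0 ↔ ∀ s, q s = p s / t) := by
  have key : ∀ s, p s - t * q s ≤ p s * Real.log (p s / (t * q s)) := by
    intro s
    rcases eq_or_lt_of_le (hp s) with h | h
    · rw [← h]; simp
      nlinarith [mul_nonneg ht.le (hq s)]
    · have hqs' := hpos s h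
      have htq : 0 < t * q s := mul_pos ht hqs'
      have hlog : Real.log (t * q s / p s) ≤ t * q s / p s - 1 :=
        Real.log_le_sub_one_of_pos (by positivity)
      have h1 : 1 - t * q s / p s ≤ Real.log (p s / (t * q s)) := by
        rw [Real.log_div (ne_of_gt h) (ne_of_gt htq)]
        rw [Real.log_div (ne_of_gt htq) (ne_of_gt h)] at hlog
        linarith
      have h2 : p s * (1 - t * q s / p s) ≤ p s * Real.log (p s / (t * q s)) :=
        mul_le_mul_of_nonneg_left h1 (le_of_lt h)
      have h3 : p s * (1 - t * q s / p s) = p s - t * q s := by field_simp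
      linarith
  have hsum0 : ∑ s, (p s - t * q s) = 0 := by
    rw [Finset.sum_sub_distrib, ← Finset.mul_sum, hqs, hps]; ring
  have hge : 0 ≤ ∑ s, p s * Real.log (p s / (t * q s)) := by
    rw [← hsum0]; exact Finset.sum_le_sum fun s _ => key s
  refine ⟨hge, ?_, ?_⟩
  · intro h0
    have heq := (Finset.sum_eq_sum_iff_of_le (fun s _ => key s)).mp (by rw [hsum0, h0])
    intro s
    have hs := (heq s (Finset.mem_univ s)).symm
    rcases eq_or_lt_of_le (hp s) with h | h
    · rw [← h] at hs ⊢
      simp only [zero_mul] at hs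
      have : q s = 0 := by
        have := hs.symm
        nlinarith
      rw [this]; simp
    · have hqs' := hpos s h
      by_contra hne
      have hne' : t * q s ≠ p s := by
        intro hcontra
        apply hne
        field_simp
        linarith [hcontra]
      have hu : t * q s / p s ≠ 1 := by
        intro hcontra
        apply hne'
        field_simp at hcontra
        linarith [hcontra]
      have hupos : 0 < t * q s / p s := by positivity
      have hlogne : Real.log (t * q s / p s) ≠ 0 := by
        intro hz
        exact hu ((Real.log_eq_zero.mp hz).resolve_left (ne_of_gt hupos) |>.resolve_right (by linarith))
      have hstrict := Real.add_one_lt_exp hlogne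
      rw [Real.exp_log hupos] at hstrict
      have hlt : Real.log (t * q s / p s) < t * q s / p s - 1 := by linarith
      have h1 : 1 - t * q s / p s < Real.log (p s / (t * q s)) := by
        rw [Real.log_div (ne_of_gt h) (ne_of_gt (mul_pos ht hqs'))]
        rw [Real.log_div (ne_of_gt (mul_pos ht hqs')) (ne_of_gt h)] at hlt
        linarith
      have h2 : p s * (1 - t * q s / p s) < p s * Real.log (p s / (t * q s)) :=
        mul_lt_mul_of_pos_left h1 h
      have h3 : p s * (1 - t * q s / p s) = p s - t * q s := by field_simp
      linarith [hs]
  · intro h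
    apply Finset.sum_eq_zero
    intro s _
    rcases eq_or_lt_of_le (hp s) with hp0 | hp0
    · rw [← hp0]; ring
    · rw [h s]
      have : p s / (t * (p s / t)) = 1 := by field_simp
      rw [this, Real.log_one, mul_zero]

/-- Tightness of the variational bound: the lower bound
`H(S) + ∑_{x,s} P(X=x,S=s) log (Q x s)` equals `I(X;S)` if and only if `Q` is
the true conditional distribution `Q x s = P(S = s | X = x)` for every `x`
with `P(X = x) > 0` and every `s`. -/
theorem variational_bound_tight_iff_true_posterior
    {Ω 𝒳 𝒮 : Type*} [Fintype Ω] [Fintype 𝒳] [Fintype 𝒮] [DecidableEq 𝒳] [DecidableEq 𝒮]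
    (P : Ω → ℝ) (hP : ∀ ω, 0 ≤ P ω) (hPsum : ∑ ω, P ω = 1)
    (X : Ω → 𝒳) (S : Ω → 𝒮)
    (Q : 𝒳 → 𝒮 → ℝ)
    (hQnonneg : ∀ x s, 0 ≤ Q x s) (hQsum : ∀ x, ∑ s, Q x s = 1)
    (hQpos : ∀ x s, 0 < joint P X S x s → 0 < Q x s) :
    (mutualInfo P X S =
        entropy P S + ∑ x, ∑ s, joint P X S x s * Real.log (Q x s))
      ↔ ∀ x, 0 < margin P X x →
          ∀ s, Q x s = joint P X S x s / margin P X x := by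
  set J := joint P X S with hJ
  set M := margin P X with hM
  set N := margin P S with hN
  have hJnn : ∀ x s, 0 ≤ J x s := joint_nonneg' P hP X S
  have hJM : ∀ x s, J x s ≤ M x := joint_le_marginX' P hP X S
  have hJN : ∀ x s, J x s ≤ N s := joint_le_marginS' P hP X S
  -- the KL terms
  set KL : 𝒳 → ℝ := fun x => ∑ s, J x s * Real.log (J x s / (M x * Q x s)) with hKL
  -- Step A : identity
  have hId : mutualInfo P X S - (entropy P S + ∑ x, ∑ s, J x s * Real.log (Q x s))
      = ∑ x, KL x := by
    have hent : ∑ s, N s * Real.log (N s) = ∑ x, ∑ s, J x s * Real.log (N s) := by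
      rw [Finset.sum_comm]
      refine Finset.sum_congr rfl fun s _ => ?_
      rw [← Finset.sum_mul, sum_x_joint' P X S s]
    have hterm : ∀ x s, J x s * Real.log (J x s / (M x * N s)) + J x s * Real.log (N s)
        - J x s * Real.log (Q x s) = J x s * Real.log (J x s / (M x * Q x s)) := by
      intro x s
      rcases eq_or_lt_of_le (hJnn x s) with h | h
      · rw [← h]; ring
      · have hMx : 0 < M x := lt_of_lt_of_le h (hJM x s)
        have hNs : 0 < N s := lt_of_lt_of_le h (hJN x s)
        have hQ := hQpos x s h
        rw [Real.log_div (ne_of_gt h) (by positivity), Real.log_div (ne_of_gt h) (by positivity),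
          Real.log_mul (ne_of_gt hMx) (ne_of_gt hNs), Real.log_mul (ne_of_gt hMx) (ne_of_gt hQ)]
        ring
    unfold mutualInfo entropy
    rw [hent, ← hJ, ← hM, ← hN]
    have step : (∑ x, ∑ s, J x s * Real.log (J x s / (M x * N s)))
        - (-(∑ x, ∑ s, J x s * Real.log (N s)) + ∑ x, ∑ s, J x s * Real.log (Q x s))
        = ((∑ x, ∑ s, J x s * Real.log (J x s / (M x * N s)))
            + (∑ x, ∑ s, J x s * Real.log (N s)))
          - ∑ x, ∑ s, J x s * Real.log (Q x s) := by ring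
    rw [step, ← Finset.sum_add_distrib, ← Finset.sum_sub_distrib]
    refine Finset.sum_congr rfl fun x _ => ?_
    rw [← Finset.sum_add_distrib, ← Finset.sum_sub_distrib]
    exact Finset.sum_congr rfl fun s _ => hterm x s
  -- KL facts
  have hKLfacts : ∀ x, (0 ≤ KL x) ∧ (0 < M x → (KL x = 0 ↔ ∀ s, Q x s = J x s / M x)) := by
    intro x
    rcases eq_or_lt_of_le (show (0:ℝ) ≤ M x from margin_nonneg' P hP X x) with h0 | h0
    · have hz : ∀ s, J x s = 0 := fun s => le_antisymm (by linarith [hJM x s]) (hJnn x s)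
      constructor
      · apply Finset.sum_nonneg
        intro s _
        rw [hz s]; simp
      · intro hc; exact absurd hc (by rw [← h0]; exact lt_irrefl 0)
    · have hg := gibbs' (J x) (Q x) (M x) h0 (hJnn x) (hQnonneg x)
        (sum_s_joint' P X S x) (hQsum x) (hQpos x)
      exact ⟨hg.1, fun _ => hg.2⟩
  have hKLzero : ∀ x, ¬ (0 < M x) → KL x = 0 := by
    intro x hx
    have h0 : M x = 0 := le_antisymm (not_lt.mp hx) (show (0:ℝ) ≤ M x from margin_nonneg' P hP X x)
    apply Finset.sum_eq_zero
    intro s _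
    have : J x s = 0 := le_antisymm (by linarith [hJM x s]) (hJnn x s)
    rw [this]; simp
  constructor
  · intro heq x hx s
    have hD : ∑ x, KL x = 0 := by rw [← hId]; linarith [heq]
    have hall := (Finset.sum_eq_zero_iff_of_nonneg (fun x _ => (hKLfacts x).1)).mp hD
    exact ((hKLfacts x).2 hx).mp (hall x (Finset.mem_univ x)) s
  · intro hcond
    have hD : ∑ x, KL x = 0 := by
      apply Finset.sum_eq_zero
      intro x _
      by_cases hx : 0 < M x
      · exact ((hKLfacts x).2 hx).mpr (hcond x hx)
      · exact hKLzero x hx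
    have := hId
    rw [hD] at this
    linarith
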